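/- Let a ∈ ℝ and β > c > 0 be real numbers, set b = 2c² − a², ρ(x,t) = ax + bt, and R = √(β² − c²) > 0. Define q_b(x,t) = e^{iρ} · [e^{−4iRβt}(c² + 2Rβ − 2β²) + (e^{−4Rat + 2Rx} + e^{4Rat − 2Rx})·βc + e^{4iRβt}(c² − 2Rβ − 2β²)] / [2c·cos(4Rβt) − β·(e^{−2Rx + 4Rat} + e^{2Rx − 4Rat})]. Then the denominator 2c·cos(4Rβt) − 2β·cosh(2Rx − 4Rat) is nonzero for all (x,t) ∈ ℝ², and q_b satisfies the focusing NLS equation i·∂t q_b + ∂x² q_b + 2 (q_b)² conj(q_b) = 0 on ℝ². -/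

import Mathlib

open Complex

noncomputable def pX (f : ℝ → ℝ → ℂ) : ℝ → ℝ → ℂ := fun x t => deriv (fun x' => f x' t) x
noncomputable def pT (f : ℝ → ℝ → ℂ) : ℝ → ℝ → ℂ := fun x t => deriv (fun t' => f x t') t

noncomputable section NLSaux

/-- reshape a `HasDerivAt` along pointwise equality of functions and of values. -/
lemma HasDerivAt.reshape {f g : ℝ → ℂ} {v w : ℂ} {x : ℝ}
    (h : HasDerivAt f v x) (hfg : ∀ y, f y = g y) (hvw : v = w) : HasDerivAt g w x := by
  have : f = g := funext hfg
  rw [← this, ← hvw]; exact h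

lemma hasDerivAt_exp_lin (p q : ℂ) (x : ℝ) :
    HasDerivAt (fun y : ℝ => Complex.exp (p * y + q)) (p * Complex.exp (p * x + q)) x := by
  have h0 : HasDerivAt (fun z : ℂ => p * z + q) p (x : ℂ) := by
    simpa using ((hasDerivAt_id ((x : ℝ) : ℂ)).const_mul p).add_const q
  simpa [mul_comm] using h0.cexp.comp_ofReal

def Wf (a b : ℝ) (x t : ℝ) : ℂ := Complex.exp (I * a * x + I * b * t)
def WiF (a b : ℝ) (x t : ℝ) : ℂ := Complex.exp (-(I * a) * x + -(I * b) * t)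
def Uf (R a : ℝ) (x t : ℝ) : ℂ := Complex.exp (2 * R * x + -(4 * R * a) * t)
def UiF (R a : ℝ) (x t : ℝ) : ℂ := Complex.exp (-(2 * R) * x + 4 * R * a * t)
def Vf (R β : ℝ) (t : ℝ) : ℂ := Complex.exp (4 * I * R * β * t + 0)
def ViF (R β : ℝ) (t : ℝ) : ℂ := Complex.exp (-(4 * I * R * β) * t + 0)

variable {a b β c R x t : ℝ}

lemma Wf_x : HasDerivAt (fun y => Wf a b y t) (I * a * Wf a b x t) x :=
  hasDerivAt_exp_lin (I * a) (I * b * t) x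

lemma Wf_t : HasDerivAt (fun s => Wf a b x s) (I * b * Wf a b x t) t :=
  (hasDerivAt_exp_lin (I * b) (I * a * x) t).reshape
    (fun s => congrArg Complex.exp (by ring)) (by rw [Wf]; try ring_nf)

lemma Uf_x : HasDerivAt (fun y => Uf R a y t) (2 * (R : ℂ) * Uf R a x t) x :=
  hasDerivAt_exp_lin (2 * R) (-(4 * R * a) * t) x

lemma Uf_t : HasDerivAt (fun s => Uf R a x s) (-(4 * (R : ℂ) * a) * Uf R a x t) t :=
  (hasDerivAt_exp_lin (-(4 * R * a)) (2 * R * x) t).reshape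
    (fun s => congrArg Complex.exp (by ring)) (by rw [Uf]; try ring_nf)

lemma UiF_x : HasDerivAt (fun y => UiF R a y t) (-(2 * (R : ℂ)) * UiF R a x t) x :=
  hasDerivAt_exp_lin (-(2 * R)) (4 * R * a * t) x

lemma UiF_t : HasDerivAt (fun s => UiF R a x s) (4 * (R : ℂ) * a * UiF R a x t) t :=
  (hasDerivAt_exp_lin (4 * R * a) (-(2 * R) * x) t).reshape
    (fun s => congrArg Complex.exp (by ring)) (by rw [UiF]; try ring_nf)

lemma Vf_t : HasDerivAt (fun s => Vf R β s) (4 * I * R * β * Vf R β t) t :=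
  (hasDerivAt_exp_lin (4 * I * R * β) 0 t).reshape (fun s => rfl) (by rw [Vf]; try ring_nf)

lemma ViF_t : HasDerivAt (fun s => ViF R β s) (-(4 * I * (R : ℂ) * β) * ViF R β t) t :=
  (hasDerivAt_exp_lin (-(4 * I * R * β)) 0 t).reshape (fun s => rfl) (by rw [ViF]; try ring_nf)

lemma conj_Wf : (starRingEnd ℂ) (Wf a b x t) = WiF a b x t := by
  rw [Wf, WiF, ← Complex.exp_conj]
  exact congrArg Complex.exp (by simp [map_add, map_mul, map_ofNat, Complex.conj_ofReal, Complex.conj_I]; try ring)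

lemma conj_Uf : (starRingEnd ℂ) (Uf R a x t) = Uf R a x t := by
  rw [Uf, ← Complex.exp_conj]
  exact congrArg Complex.exp (by simp [map_add, map_mul, map_ofNat, Complex.conj_ofReal])

lemma conj_UiF : (starRingEnd ℂ) (UiF R a x t) = UiF R a x t := by
  rw [UiF, ← Complex.exp_conj]
  exact congrArg Complex.exp (by simp [map_add, map_mul, map_ofNat, Complex.conj_ofReal])

lemma conj_Vf : (starRingEnd ℂ) (Vf R β t) = ViF R β t := by
  rw [Vf, ViF, ← Complex.exp_conj]
  exact congrArg Complex.exp (by simp [map_add, map_mul, map_ofNat, Complex.conj_ofReal, Complex.conj_I]; try ring)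

lemma conj_ViF : (starRingEnd ℂ) (ViF R β t) = Vf R β t := by
  rw [Vf, ViF, ← Complex.exp_conj]
  exact congrArg Complex.exp (by simp [map_add, map_mul, map_ofNat, Complex.conj_ofReal, Complex.conj_I]; try ring)

lemma UUi : Uf R a x t * UiF R a x t = 1 := by
  rw [Uf, UiF, ← Complex.exp_add, show ((2 * R * x + -(4 * R * a) * t) + (-(2 * R) * x + 4 * R * a * t) : ℂ) = 0 by ring, Complex.exp_zero]

lemma VVi : Vf R β t * ViF R β t = 1 := by
  rw [Vf, ViF, ← Complex.exp_add, show ((4 * I * R * β * t + 0) + (-(4 * I * R * β) * t + 0) : ℂ) = 0 by ring, Complex.exp_zero]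

lemma WWi : Wf a b x t * WiF a b x t = 1 := by
  rw [Wf, WiF, ← Complex.exp_add, show ((I * a * x + I * b * t) + (-(I * a) * x + -(I * b) * t) : ℂ) = 0 by ring, Complex.exp_zero]

def Av (β c R : ℝ) : ℂ := (c : ℂ) ^ 2 + 2 * R * β - 2 * β ^ 2
def Bv (β c R : ℝ) : ℂ := (c : ℂ) ^ 2 - 2 * R * β - 2 * β ^ 2
def NumF (β c R a : ℝ) (x t : ℝ) : ℂ :=
  ViF R β t * Av β c R + (Uf R a x t + UiF R a x t) * ((β : ℂ) * c) + Vf R β t * Bv β c R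
def NumcF (β c R a : ℝ) (x t : ℝ) : ℂ :=
  Vf R β t * Av β c R + (Uf R a x t + UiF R a x t) * ((β : ℂ) * c) + ViF R β t * Bv β c R
def DenF (β c R a : ℝ) (x t : ℝ) : ℂ :=
  (c : ℂ) * (Vf R β t + ViF R β t) - (β : ℂ) * (Uf R a x t + UiF R a x t)
def NumXF (β c R a : ℝ) (x t : ℝ) : ℂ :=
  (2 * (R : ℂ) * Uf R a x t - 2 * R * UiF R a x t) * ((β : ℂ) * c)
def NumXXF (β c R a : ℝ) (x t : ℝ) : ℂ :=
  (4 * (R : ℂ) ^ 2 * Uf R a x t + 4 * R ^ 2 * UiF R a x t) * ((β : ℂ) * c)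
def NumTF (β c R a : ℝ) (x t : ℝ) : ℂ :=
  -(4 * I * (R : ℂ) * β) * ViF R β t * Av β c R
    + (-(4 * (R : ℂ) * a) * Uf R a x t + 4 * R * a * UiF R a x t) * ((β : ℂ) * c)
    + 4 * I * (R : ℂ) * β * Vf R β t * Bv β c R
def DenXF (β c R a : ℝ) (x t : ℝ) : ℂ :=
  -(β : ℂ) * (2 * (R : ℂ) * Uf R a x t - 2 * R * UiF R a x t)
def DenXXF (β c R a : ℝ) (x t : ℝ) : ℂ :=
  -(β : ℂ) * (4 * (R : ℂ) ^ 2 * Uf R a x t + 4 * R ^ 2 * UiF R a x t)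
def DenTF (β c R a : ℝ) (x t : ℝ) : ℂ :=
  (c : ℂ) * (4 * I * (R : ℂ) * β * Vf R β t + -(4 * I * (R : ℂ) * β) * ViF R β t)
    - (β : ℂ) * (-(4 * (R : ℂ) * a) * Uf R a x t + 4 * R * a * UiF R a x t)
def GNF (a b β c R : ℝ) (x t : ℝ) : ℂ := Wf a b x t * NumF β c R a x t
def GNXF (a b β c R : ℝ) (x t : ℝ) : ℂ :=
  I * a * Wf a b x t * NumF β c R a x t + Wf a b x t * NumXF β c R a x t
def GNXXF (a b β c R : ℝ) (x t : ℝ) : ℂ :=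
  I * a * (I * a * Wf a b x t) * NumF β c R a x t + I * a * Wf a b x t * NumXF β c R a x t
    + (I * a * Wf a b x t * NumXF β c R a x t + Wf a b x t * NumXXF β c R a x t)
def F2F (a b β c R : ℝ) (x t : ℝ) : ℂ :=
  GNXF a b β c R x t * DenF β c R a x t - GNF a b β c R x t * DenXF β c R a x t
def F2XF (a b β c R : ℝ) (x t : ℝ) : ℂ :=
  (GNXXF a b β c R x t * DenF β c R a x t + GNXF a b β c R x t * DenXF β c R a x t)
    - (GNXF a b β c R x t * DenXF β c R a x t + GNF a b β c R x t * DenXXF β c R a x t)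
def GXF (a b β c R : ℝ) (x t : ℝ) : ℂ := F2F a b β c R x t / DenF β c R a x t ^ 2
def GXXF (a b β c R : ℝ) (x t : ℝ) : ℂ :=
  (F2XF a b β c R x t * DenF β c R a x t ^ 2
    - F2F a b β c R x t * (2 * DenF β c R a x t * DenXF β c R a x t)) / (DenF β c R a x t ^ 2) ^ 2
def GTF (a b β c R : ℝ) (x t : ℝ) : ℂ :=
  ((I * b * Wf a b x t * NumF β c R a x t + Wf a b x t * NumTF β c R a x t) * DenF β c R a x t
    - GNF a b β c R x t * DenTF β c R a x t) / DenF β c R a x t ^ 2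

lemma NumF_x : HasDerivAt (fun y => NumF β c R a y t) (NumXF β c R a x t) x := by
  have h := ((hasDerivAt_const x (ViF R β t * Av β c R)).add
      (((Uf_x (R := R) (a := a) (x := x) (t := t)).add
        (UiF_x (R := R) (a := a) (x := x) (t := t))).mul_const ((β : ℂ) * c))).add
      (hasDerivAt_const x (Vf R β t * Bv β c R))
  exact h.reshape (fun y => rfl) (by rw [NumXF]; try ring)

lemma NumXF_x : HasDerivAt (fun y => NumXF β c R a y t) (NumXXF β c R a x t) x := by
  have h := (((Uf_x (R := R) (a := a) (x := x) (t := t)).const_mul (2 * (R : ℂ))).sub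
      ((UiF_x (R := R) (a := a) (x := x) (t := t)).const_mul (2 * (R : ℂ)))).mul_const ((β : ℂ) * c)
  exact h.reshape (fun y => by rw [NumXF]; rfl) (by rw [NumXXF]; try ring)

lemma NumF_t : HasDerivAt (fun s => NumF β c R a x s) (NumTF β c R a x t) t := by
  have h := (((ViF_t (R := R) (β := β) (t := t)).mul_const (Av β c R)).add
      (((Uf_t (R := R) (a := a) (x := x) (t := t)).add
        (UiF_t (R := R) (a := a) (x := x) (t := t))).mul_const ((β : ℂ) * c))).add
      ((Vf_t (R := R) (β := β) (t := t)).mul_const (Bv β c R))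
  exact h.reshape (fun s => rfl) (by rw [NumTF]; try ring)

lemma DenF_x : HasDerivAt (fun y => DenF β c R a y t) (DenXF β c R a x t) x := by
  have h := (hasDerivAt_const x ((c : ℂ) * (Vf R β t + ViF R β t))).sub
      (((Uf_x (R := R) (a := a) (x := x) (t := t)).add
        (UiF_x (R := R) (a := a) (x := x) (t := t))).const_mul (β : ℂ))
  exact h.reshape (fun y => rfl) (by rw [DenXF]; try ring)

lemma DenXF_x : HasDerivAt (fun y => DenXF β c R a y t) (DenXXF β c R a x t) x := by
  have h := (((Uf_x (R := R) (a := a) (x := x) (t := t)).const_mul (2 * (R : ℂ))).sub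
      ((UiF_x (R := R) (a := a) (x := x) (t := t)).const_mul (2 * (R : ℂ)))).const_mul (-(β : ℂ))
  exact h.reshape (fun y => by rw [DenXF]; rfl) (by rw [DenXXF]; try ring)

lemma DenF_t : HasDerivAt (fun s => DenF β c R a x s) (DenTF β c R a x t) t := by
  have h := (((Vf_t (R := R) (β := β) (t := t)).add
      (ViF_t (R := R) (β := β) (t := t))).const_mul (c : ℂ)).sub
      (((Uf_t (R := R) (a := a) (x := x) (t := t)).add
        (UiF_t (R := R) (a := a) (x := x) (t := t))).const_mul (β : ℂ))
  exact h.reshape (fun s => rfl) (by rw [DenTF]; try ring)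

lemma GNF_x : HasDerivAt (fun y => GNF a b β c R y t) (GNXF a b β c R x t) x := by
  have h := (Wf_x (a := a) (b := b) (x := x) (t := t)).mul
      (NumF_x (β := β) (c := c) (R := R) (a := a) (x := x) (t := t))
  exact h.reshape (fun y => rfl) (by rw [GNXF]; try ring)

lemma GNXF_x : HasDerivAt (fun y => GNXF a b β c R y t) (GNXXF a b β c R x t) x := by
  have h := (((Wf_x (a := a) (b := b) (x := x) (t := t)).const_mul (I * a)).mul
      (NumF_x (β := β) (c := c) (R := R) (a := a) (x := x) (t := t))).add
      ((Wf_x (a := a) (b := b) (x := x) (t := t)).mul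
        (NumXF_x (β := β) (c := c) (R := R) (a := a) (x := x) (t := t)))
  exact h.reshape (fun y => by rw [GNXF]; rfl) (by rw [GNXXF]; try ring)

lemma F2F_x : HasDerivAt (fun y => F2F a b β c R y t) (F2XF a b β c R x t) x := by
  have h := ((GNXF_x (a := a) (b := b) (β := β) (c := c) (R := R) (x := x) (t := t)).mul
      (DenF_x (β := β) (c := c) (R := R) (a := a) (x := x) (t := t))).sub
      ((GNF_x (a := a) (b := b) (β := β) (c := c) (R := R) (x := x) (t := t)).mul
        (DenXF_x (β := β) (c := c) (R := R) (a := a) (x := x) (t := t)))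
  exact h.reshape (fun y => rfl) (by rw [F2XF])
lemma conj_Av : (starRingEnd ℂ) (Av β c R) = Av β c R := by
  rw [Av]; simp [map_sub, map_add, map_mul, map_pow, map_ofNat, Complex.conj_ofReal]

lemma conj_Bv : (starRingEnd ℂ) (Bv β c R) = Bv β c R := by
  rw [Bv]; simp [map_sub, map_add, map_mul, map_pow, map_ofNat, Complex.conj_ofReal]

lemma conj_NumF : (starRingEnd ℂ) (NumF β c R a x t) = NumcF β c R a x t := by
  rw [NumF, NumcF]
  simp only [map_add, map_mul, conj_Vf, conj_ViF, conj_Uf, conj_UiF, conj_Av, conj_Bv,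
    Complex.conj_ofReal]

lemma conj_DenF : (starRingEnd ℂ) (DenF β c R a x t) = DenF β c R a x t := by
  rw [DenF]
  simp only [map_sub, map_add, map_mul, conj_Vf, conj_ViF, conj_Uf, conj_UiF,
    Complex.conj_ofReal]
  ring

lemma two_cos_VVi : 2 * Complex.cos (4 * (R : ℂ) * β * t) = Vf R β t + ViF R β t := by
  rw [Complex.two_cos, Vf, ViF,
    show (4 * (R : ℂ) * β * t) * I = 4 * I * (R : ℂ) * β * t + 0 by ring,
    show -(4 * (R : ℂ) * β * ↑t) * I = -(4 * I * (R : ℂ) * β) * t + 0 by ring]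

lemma two_cosh_UUi : 2 * Complex.cosh (2 * (R : ℂ) * x - 4 * R * a * t)
    = Uf R a x t + UiF R a x t := by
  rw [Complex.two_cosh, Uf, UiF,
    show -(2 * (R : ℂ) * x - 4 * R * a * t) = -(2 * (R : ℂ)) * x + 4 * R * a * t by ring,
    show (2 * (R : ℂ) * x - 4 * (R : ℂ) * a * t) = 2 * R * x + -(4 * (R : ℂ) * a) * t by ring]

lemma DenF_real : DenF β c R a x t
    = ((2 * c * Real.cos (4 * R * β * t) - 2 * β * Real.cosh (2 * R * x - 4 * R * a * t) : ℝ) : ℂ) := by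
  rw [DenF]
  push_cast
  linear_combination (β : ℂ) * two_cosh_UUi (R := R) (a := a) (x := x) (t := t)
    - (c : ℂ) * two_cos_VVi (R := R) (β := β) (t := t)

lemma DenF_ne (hc : 0 < c) (hβ : c < β) : DenF β c R a x t ≠ 0 := by
  rw [DenF_real, ne_eq, Complex.ofReal_eq_zero]
  have h : 2 * c * Real.cos (4 * R * β * t) - 2 * β * Real.cosh (2 * R * x - 4 * R * a * t) < 0 := by
    nlinarith [Real.cos_le_one (4 * R * β * t), Real.one_le_cosh (2 * R * x - 4 * R * a * t)]
  exact ne_of_lt h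

set_option maxHeartbeats 4000000


lemma key (a b B c R u ui v vi w wi : ℂ)
    (hb : b = 2 * c ^ 2 - a ^ 2)
    (hR : R ^ 2 = B ^ 2 - c ^ 2)
    (hU : u * ui = 1) (hV : v * vi = 1) (hW : w * wi = 1) :
    I * ((I * b * w * (vi * (c ^ 2 + 2 * R * B - 2 * B ^ 2) + (u + ui) * (B * c) + v * (c ^ 2 - 2 * R * B - 2 * B ^ 2))
          + w * (-(4 * I * R * B) * vi * (c ^ 2 + 2 * R * B - 2 * B ^ 2)
                 + (-(4 * R * a) * u + 4 * R * a * ui) * (B * c)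
                 + 4 * I * R * B * v * (c ^ 2 - 2 * R * B - 2 * B ^ 2)))
         * (c * (v + vi) - B * (u + ui))
        - w * (vi * (c ^ 2 + 2 * R * B - 2 * B ^ 2) + (u + ui) * (B * c) + v * (c ^ 2 - 2 * R * B - 2 * B ^ 2))
          * (c * (4 * I * R * B * v + -(4 * I * R * B) * vi) - B * (-(4 * R * a) * u + 4 * R * a * ui)))
      * (c * (v + vi) - B * (u + ui)) ^ 2
    + (((I * a * (I * a * w) * (vi * (c ^ 2 + 2 * R * B - 2 * B ^ 2) + (u + ui) * (B * c) + v * (c ^ 2 - 2 * R * B - 2 * B ^ 2))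
          + I * a * w * ((2 * R * u - 2 * R * ui) * (B * c))
          + (I * a * w * ((2 * R * u - 2 * R * ui) * (B * c))
             + w * ((4 * R ^ 2 * u + 4 * R ^ 2 * ui) * (B * c))))
          * (c * (v + vi) - B * (u + ui))
        + (I * a * w * (vi * (c ^ 2 + 2 * R * B - 2 * B ^ 2) + (u + ui) * (B * c) + v * (c ^ 2 - 2 * R * B - 2 * B ^ 2))
            + w * ((2 * R * u - 2 * R * ui) * (B * c)))
          * (-(B) * (2 * R * u - 2 * R * ui))
        - ((I * a * w * (vi * (c ^ 2 + 2 * R * B - 2 * B ^ 2) + (u + ui) * (B * c) + v * (c ^ 2 - 2 * R * B - 2 * B ^ 2))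
             + w * ((2 * R * u - 2 * R * ui) * (B * c)))
            * (-(B) * (2 * R * u - 2 * R * ui))
           + w * (vi * (c ^ 2 + 2 * R * B - 2 * B ^ 2) + (u + ui) * (B * c) + v * (c ^ 2 - 2 * R * B - 2 * B ^ 2))
             * (-(B) * (4 * R ^ 2 * u + 4 * R ^ 2 * ui))))
        * (c * (v + vi) - B * (u + ui)) ^ 2
       - ((I * a * w * (vi * (c ^ 2 + 2 * R * B - 2 * B ^ 2) + (u + ui) * (B * c) + v * (c ^ 2 - 2 * R * B - 2 * B ^ 2))
            + w * ((2 * R * u - 2 * R * ui) * (B * c)))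
           * (c * (v + vi) - B * (u + ui))
          - w * (vi * (c ^ 2 + 2 * R * B - 2 * B ^ 2) + (u + ui) * (B * c) + v * (c ^ 2 - 2 * R * B - 2 * B ^ 2))
            * (-(B) * (2 * R * u - 2 * R * ui)))
         * (2 * (c * (v + vi) - B * (u + ui)) * (-(B) * (2 * R * u - 2 * R * ui))))
    + 2 * (w * (vi * (c ^ 2 + 2 * R * B - 2 * B ^ 2) + (u + ui) * (B * c) + v * (c ^ 2 - 2 * R * B - 2 * B ^ 2))) ^ 2
        * (wi * (v * (c ^ 2 + 2 * R * B - 2 * B ^ 2) + (u + ui) * (B * c) + vi * (c ^ 2 - 2 * R * B - 2 * B ^ 2)))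
        * (c * (v + vi) - B * (u + ui))
    = 0 := by
  linear_combination
      ((2) * c^7 * vi^4 * w + (8) * c^7 * v * vi^3 * w + (12) * c^7 * v^2 * vi^2 * w + (8) * c^7 * v^3 * vi * w + (2) * c^7 * v^4 * w + (4) * B * c^5 * R * vi^4 * w + (8) * B * c^5 * R * v * vi^3 * w + (-8) * B * c^5 * R * v^3 * vi * w + (-4) * B * c^5 * R * v^4 * w + (-4) * B * c^6 * ui * vi^3 * w + (-12) * B * c^6 * ui * v * vi^2 * w + (-12) * B * c^6 * ui * v^2 * vi * w + (-4) * B * c^6 * ui * v^3 * w + (-4) * B * c^6 * u * vi^3 * w + (-12) * B * c^6 * u * v * vi^2 * w + (-12) * B * c^6 * u * v^2 * vi * w + (-4) * B * c^6 * u * v^3 * w + (-32) * B^2 * c^3 * R^2 * v * vi^3 * w + (-64) * B^2 * c^3 * R^2 * v^2 * vi^2 * w + (-32) * B^2 * c^3 * R^2 * v^3 * vi * w + (-4) * B^2 * c^4 * R * ui * vi^3 * w + (-4) * B^2 * c^4 * R * ui * v * vi^2 * w + (4) * B^2 * c^4 * R * ui * v^2 * vi * w + (4) * B^2 * c^4 *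 R * ui * v^3 * w + (-4) * B^2 * c^4 * R * u * vi^3 * w + (-4) * B^2 * c^4 * R * u * v * vi^2 * w + (4) * B^2 * c^4 * R * u * v^2 * vi * w + (4) * B^2 * c^4 * R * u * v^3 * w + (-4) * B^2 * c^5 * vi^4 * w + (-16) * B^2 * c^5 * v * vi^3 * w + (-24) * B^2 * c^5 * v^2 * vi^2 * w + (-16) * B^2 * c^5 * v^3 * vi * w + (-4) * B^2 * c^5 * v^4 * w + (8) * B^3 * c^2 * R^2 * ui * vi^3 * w + (88) * B^3 * c^2 * R^2 * ui * v * vi^2 * w + (88) * B^3 * c^2 * R^2 * ui * v^2 * vi * w + (8) * B^3 * c^2 * R^2 * ui * v^3 * w + (8) * B^3 * c^2 * R^2 * u * vi^3 * w + (88) * B^3 * c^2 * R^2 * u * v * vi^2 * w + (88) * B^3 * c^2 * R^2 * u * v^2 * vi * w + (8) * B^3 * c^2 * R^2 * u * v^3 * w + (-4) * B^3 * c^3 * R * ui^2 * vi^2 * w + (4) * B^3 * c^3 * R * ui^2 * v^2 * w + (-8) * B^3 * c^3 * R * u * ui * vi^2 * w + (8) * B^3 * c^3 * R * u * ui * v^2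 * w + (-4) * B^3 * c^3 * R * u^2 * vi^2 * w + (4) * B^3 * c^3 * R * u^2 * v^2 * w + (12) * B^3 * c^4 * ui * vi^3 * w + (36) * B^3 * c^4 * ui * v * vi^2 * w + (36) * B^3 * c^4 * ui * v^2 * vi * w + (12) * B^3 * c^4 * ui * v^3 * w + (4) * B^3 * c^4 * ui^3 * vi * w + (4) * B^3 * c^4 * ui^3 * v * w + (12) * B^3 * c^4 * u * vi^3 * w + (36) * B^3 * c^4 * u * v * vi^2 * w + (36) * B^3 * c^4 * u * v^2 * vi * w + (12) * B^3 * c^4 * u * v^3 * w + (12) * B^3 * c^4 * u * ui^2 * vi * w + (12) * B^3 * c^4 * u * ui^2 * v * w + (12) * B^3 * c^4 * u^2 * ui * vi * w + (12) * B^3 * c^4 * u^2 * ui * v * w + (4) * B^3 * c^4 * u^3 * vi * w + (4) * B^3 * c^4 * u^3 * v * w + (-16) * B^4 * c * R^2 * ui^2 * vi^2 * w + (-64) * B^4 * c * R^2 * ui^2 * v * vi * w + (-16) * B^4 * c * R^2 * ui^2 * v^2 * w + (-32) * B^4 * c * R^2 * u * ui * vi^2 * w + (-128) * B^4 * c * R^2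 * u * ui * v * vi * w + (-32) * B^4 * c * R^2 * u * ui * v^2 * w + (-16) * B^4 * c * R^2 * u^2 * vi^2 * w + (-64) * B^4 * c * R^2 * u^2 * v * vi * w + (-16) * B^4 * c * R^2 * u^2 * v^2 * w + (-8) * B^4 * c^2 * R * ui * vi^3 * w + (-8) * B^4 * c^2 * R * ui * v * vi^2 * w + (8) * B^4 * c^2 * R * ui * v^2 * vi * w + (8) * B^4 * c^2 * R * ui * v^3 * w + (4) * B^4 * c^2 * R * ui^3 * vi * w + (-4) * B^4 * c^2 * R * ui^3 * v * w + (-8) * B^4 * c^2 * R * u * vi^3 * w + (-8) * B^4 * c^2 * R * u * v * vi^2 * w + (8) * B^4 * c^2 * R * u * v^2 * vi * w + (8) * B^4 * c^2 * R * u * v^3 * w + (12) * B^4 * c^2 * R * u * ui^2 * vi * w + (-12) * B^4 * c^2 * R * u * ui^2 * v * w + (12) * B^4 * c^2 * R * u^2 * ui * vi * w + (-12) * B^4 * c^2 * R * u^2 * ui * v * w + (4) * B^4 * c^2 * R * u^3 * vi * w + (-4) * B^4 * c^2 * R * u^3 * v * w + (-12) * B^4 * c^3 * ui^2 * vi^2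 * w + (-24) * B^4 * c^3 * ui^2 * v * vi * w + (-12) * B^4 * c^3 * ui^2 * v^2 * w + (-2) * B^4 * c^3 * ui^4 * w + (-24) * B^4 * c^3 * u * ui * vi^2 * w + (-48) * B^4 * c^3 * u * ui * v * vi * w + (-24) * B^4 * c^3 * u * ui * v^2 * w + (-8) * B^4 * c^3 * u * ui^3 * w + (-12) * B^4 * c^3 * u^2 * vi^2 * w + (-24) * B^4 * c^3 * u^2 * v * vi * w + (-12) * B^4 * c^3 * u^2 * v^2 * w + (-12) * B^4 * c^3 * u^2 * ui^2 * w + (-8) * B^4 * c^3 * u^3 * ui * w + (-2) * B^4 * c^3 * u^4 * w + (8) * B^5 * R^2 * ui^3 * vi * w + (8) * B^5 * R^2 * ui^3 * v * w + (24) * B^5 * R^2 * u * ui^2 * vi * w + (24) * B^5 * R^2 * u * ui^2 * v * w + (24) * B^5 * R^2 * u^2 * ui * vi * w + (24) * B^5 * R^2 * u^2 * ui * v * w + (8) * B^5 * R^2 * u^3 * vi * w + (8) * B^5 * R^2 * u^3 * v * w + (16) * B^5 * c * R * ui^2 * vi^2 * w + (-16) * B^5 * c * R * ui^2 * v^2 *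 w + (32) * B^5 * c * R * u * ui * vi^2 * w + (-32) * B^5 * c * R * u * ui * v^2 * w + (16) * B^5 * c * R * u^2 * vi^2 * w + (-16) * B^5 * c * R * u^2 * v^2 * w + (4) * B^5 * c^2 * ui^3 * vi * w + (4) * B^5 * c^2 * ui^3 * v * w + (12) * B^5 * c^2 * u * ui^2 * vi * w + (12) * B^5 * c^2 * u * ui^2 * v * w + (12) * B^5 * c^2 * u^2 * ui * vi * w + (12) * B^5 * c^2 * u^2 * ui * v * w + (4) * B^5 * c^2 * u^3 * vi * w + (4) * B^5 * c^2 * u^3 * v * w + (-8) * B^6 * R * ui^3 * vi * w + (8) * B^6 * R * ui^3 * v * w + (-24) * B^6 * R * u * ui^2 * vi * w + (24) * B^6 * R * u * ui^2 * v * w + (-24) * B^6 * R * u^2 * ui * vi * w + (24) * B^6 * R * u^2 * ui * v * w + (-8) * B^6 * R * u^3 * vi * w + (8) * B^6 * R * u^3 * v * w) * Complex.I_sq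
      + ((64) * R^5 * ui * v * vi^2 * w^2 * wi + (-64) * R^5 * ui * v^2 * vi * w^2 * wi + (64) * R^5 * u * v * vi^2 * w^2 * wi + (-64) * R^5 * u * v^2 * vi * w^2 * wi + (64) * c * R^4 * v * vi^3 * w^2 * wi + (128) * c * R^4 * v^2 * vi^2 * w^2 * wi + (64) * c * R^4 * v^3 * vi * w^2 * wi + (16) * c * R^4 * ui^2 * vi^2 * w^2 * wi + (64) * c * R^4 * ui^2 * v * vi * w^2 * wi + (16) * c * R^4 * ui^2 * v^2 * w^2 * wi + (32) * c * R^4 * u * ui * vi^2 * w^2 * wi + (128) * c * R^4 * u * ui * v * vi * w^2 * wi + (32) * c * R^4 * u * ui * v^2 * w^2 * wi + (16) * c * R^4 * u^2 * vi^2 * w^2 * wi + (64) * c * R^4 * u^2 * v * vi * w^2 * wi + (16) * c * R^4 * u^2 * v^2 * w^2 * wi + (16) * c^2 * R^3 * ui * vi^3 * w^2 * wi + (80) * c^2 * R^3 * ui * v * vi^2 * w^2 * wi + (-80) * c^2 * R^3 * ui * v^2 * vi * w^2 * wi + (-16) * c^2 * R^3 * ui * v^3 * w^2 * wi + (4) *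 c^2 * R^3 * ui^3 * vi * w^2 * wi + (-4) * c^2 * R^3 * ui^3 * v * w^2 * wi + (16) * c^2 * R^3 * u * vi^3 * w^2 * wi + (80) * c^2 * R^3 * u * v * vi^2 * w^2 * wi + (-80) * c^2 * R^3 * u * v^2 * vi * w^2 * wi + (-16) * c^2 * R^3 * u * v^3 * w^2 * wi + (12) * c^2 * R^3 * u * ui^2 * vi * w^2 * wi + (-12) * c^2 * R^3 * u * ui^2 * v * w^2 * wi + (12) * c^2 * R^3 * u^2 * ui * vi * w^2 * wi + (-12) * c^2 * R^3 * u^2 * ui * v * w^2 * wi + (4) * c^2 * R^3 * u^3 * vi * w^2 * wi + (-4) * c^2 * R^3 * u^3 * v * w^2 * wi + (32) * c^3 * R^2 * v * vi^3 * w^2 * wi + (64) * c^3 * R^2 * v^2 * vi^2 * w^2 * wi + (32) * c^3 * R^2 * v^3 * vi * w^2 * wi + (28) * c^3 * R^2 * ui^2 * vi^2 * w^2 * wi + (88) * c^3 * R^2 * ui^2 * v * vi * w^2 * wi + (28) * c^3 * R^2 * ui^2 * v^2 * w^2 * wi + (2) * c^3 * R^2 * ui^4 * w^2 * wi + (56)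 * c^3 * R^2 * u * ui * vi^2 * w^2 * wi + (176) * c^3 * R^2 * u * ui * v * vi * w^2 * wi + (56) * c^3 * R^2 * u * ui * v^2 * w^2 * wi + (8) * c^3 * R^2 * u * ui^3 * w^2 * wi + (28) * c^3 * R^2 * u^2 * vi^2 * w^2 * wi + (88) * c^3 * R^2 * u^2 * v * vi * w^2 * wi + (28) * c^3 * R^2 * u^2 * v^2 * w^2 * wi + (12) * c^3 * R^2 * u^2 * ui^2 * w^2 * wi + (8) * c^3 * R^2 * u^3 * ui * w^2 * wi + (2) * c^3 * R^2 * u^4 * w^2 * wi + (12) * c^4 * R * ui * vi^3 * w^2 * wi + (12) * c^4 * R * ui * v * vi^2 * w^2 * wi + (-12) * c^4 * R * ui * v^2 * vi * w^2 * wi + (-12) * c^4 * R * ui * v^3 * w^2 * wi + (4) * c^4 * R * ui^3 * vi * w^2 * wi + (-4) * c^4 * R * ui^3 * v * w^2 * wi + (12) * c^4 * R * u * vi^3 * w^2 * wi + (12) * c^4 * R * u * v * vi^2 * w^2 * wi + (-12) * c^4 * R * u * v^2 * vi * w^2 * wi + (-12) * c^4 * R * u * v^3 * w^2 * wi + (12)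 * c^4 * R * u * ui^2 * vi * w^2 * wi + (-12) * c^4 * R * u * ui^2 * v * w^2 * wi + (12) * c^4 * R * u^2 * ui * vi * w^2 * wi + (-12) * c^4 * R * u^2 * ui * v * w^2 * wi + (4) * c^4 * R * u^3 * vi * w^2 * wi + (-4) * c^4 * R * u^3 * v * w^2 * wi + (4) * c^5 * vi^4 * w^2 * wi + (16) * c^5 * v * vi^3 * w^2 * wi + (24) * c^5 * v^2 * vi^2 * w^2 * wi + (16) * c^5 * v^3 * vi * w^2 * wi + (4) * c^5 * v^4 * w^2 * wi + (12) * c^5 * ui^2 * vi^2 * w^2 * wi + (24) * c^5 * ui^2 * v * vi * w^2 * wi + (12) * c^5 * ui^2 * v^2 * w^2 * wi + (2) * c^5 * ui^4 * w^2 * wi + (24) * c^5 * u * ui * vi^2 * w^2 * wi + (48) * c^5 * u * ui * v * vi * w^2 * wi + (24) * c^5 * u * ui * v^2 * w^2 * wi + (8) * c^5 * u * ui^3 * w^2 * wi + (12) * c^5 * u^2 * vi^2 * w^2 * wi + (24) * c^5 * u^2 * v * vi * w^2 * wi + (12) * c^5 * u^2 * v^2 * w^2 * wi + (12) * c^5 *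 u^2 * ui^2 * w^2 * wi + (8) * c^5 * u^3 * ui * w^2 * wi + (2) * c^5 * u^4 * w^2 * wi + (-64) * B * R^4 * ui * v * vi^2 * w^2 * wi + (-64) * B * R^4 * ui * v^2 * vi * w^2 * wi + (-64) * B * R^4 * u * v * vi^2 * w^2 * wi + (-64) * B * R^4 * u * v^2 * vi * w^2 * wi + (-64) * B * c * R^3 * v * vi^3 * w^2 * wi + (64) * B * c * R^3 * v^3 * vi * w^2 * wi + (-16) * B * c * R^3 * ui^2 * vi^2 * w^2 * wi + (16) * B * c * R^3 * ui^2 * v^2 * w^2 * wi + (-32) * B * c * R^3 * u * ui * vi^2 * w^2 * wi + (32) * B * c * R^3 * u * ui * v^2 * w^2 * wi + (-16) * B * c * R^3 * u^2 * vi^2 * w^2 * wi + (16) * B * c * R^3 * u^2 * v^2 * w^2 * wi + (-16) * B * c^2 * R^2 * ui * vi^3 * w^2 * wi + (-112) * B * c^2 * R^2 * ui * v * vi^2 * w^2 * wi + (-112) * B * c^2 * R^2 * ui * v^2 * vi * w^2 * wi + (-16) * B * c^2 * R^2 * ui * v^3 * w^2 * wi + (-12) * B * c^2 * R^2 * ui^3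 * vi * w^2 * wi + (-12) * B * c^2 * R^2 * ui^3 * v * w^2 * wi + (-16) * B * c^2 * R^2 * u * vi^3 * w^2 * wi + (-112) * B * c^2 * R^2 * u * v * vi^2 * w^2 * wi + (-112) * B * c^2 * R^2 * u * v^2 * vi * w^2 * wi + (-16) * B * c^2 * R^2 * u * v^3 * w^2 * wi + (-36) * B * c^2 * R^2 * u * ui^2 * vi * w^2 * wi + (-36) * B * c^2 * R^2 * u * ui^2 * v * w^2 * wi + (-36) * B * c^2 * R^2 * u^2 * ui * vi * w^2 * wi + (-36) * B * c^2 * R^2 * u^2 * ui * v * w^2 * wi + (-12) * B * c^2 * R^2 * u^3 * vi * w^2 * wi + (-12) * B * c^2 * R^2 * u^3 * v * w^2 * wi + (-12) * B * c^3 * R * ui^2 * vi^2 * w^2 * wi + (12) * B * c^3 * R * ui^2 * v^2 * w^2 * wi + (-24) * B * c^3 * R * u * ui * vi^2 * w^2 * wi + (24) * B * c^3 * R * u * ui * v^2 * w^2 * wi + (-12) * B * c^3 * R * u^2 * vi^2 * w^2 * wi + (12) * B * c^3 * R * u^2 * v^2 * w^2 * wi + (-4) * B * c^4 * ui * vi^3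 * w^2 * wi + (-12) * B * c^4 * ui * v * vi^2 * w^2 * wi + (-12) * B * c^4 * ui * v^2 * vi * w^2 * wi + (-4) * B * c^4 * ui * v^3 * w^2 * wi + (-8) * B * c^4 * ui^3 * vi * w^2 * wi + (-8) * B * c^4 * ui^3 * v * w^2 * wi + (-4) * B * c^4 * u * vi^3 * w^2 * wi + (-12) * B * c^4 * u * v * vi^2 * w^2 * wi + (-12) * B * c^4 * u * v^2 * vi * w^2 * wi + (-4) * B * c^4 * u * v^3 * w^2 * wi + (-24) * B * c^4 * u * ui^2 * vi * w^2 * wi + (-24) * B * c^4 * u * ui^2 * v * w^2 * wi + (-24) * B * c^4 * u^2 * ui * vi * w^2 * wi + (-24) * B * c^4 * u^2 * ui * v * w^2 * wi + (-8) * B * c^4 * u^3 * vi * w^2 * wi + (-8) * B * c^4 * u^3 * v * w^2 * wi + (64) * B^2 * R^3 * ui * v * vi^2 * w^2 * wi + (-64) * B^2 * R^3 * ui * v^2 * vi * w^2 * wi + (64) * B^2 * R^3 * u * v * vi^2 * w^2 * wi + (-64) * B^2 * R^3 * u * v^2 * vi * w^2 * wi + (64) * B^2 * c * R^2 * v * vi^3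 * w^2 * wi + (128) * B^2 * c * R^2 * v^2 * vi^2 * w^2 * wi + (64) * B^2 * c * R^2 * v^3 * vi * w^2 * wi + (16) * B^2 * c * R^2 * ui^2 * vi^2 * w^2 * wi + (64) * B^2 * c * R^2 * ui^2 * v * vi * w^2 * wi + (16) * B^2 * c * R^2 * ui^2 * v^2 * w^2 * wi + (32) * B^2 * c * R^2 * u * ui * vi^2 * w^2 * wi + (128) * B^2 * c * R^2 * u * ui * v * vi * w^2 * wi + (32) * B^2 * c * R^2 * u * ui * v^2 * w^2 * wi + (16) * B^2 * c * R^2 * u^2 * vi^2 * w^2 * wi + (64) * B^2 * c * R^2 * u^2 * v * vi * w^2 * wi + (16) * B^2 * c * R^2 * u^2 * v^2 * w^2 * wi + (16) * B^2 * c^2 * R * ui * vi^3 * w^2 * wi + (16) * B^2 * c^2 * R * ui * v * vi^2 * w^2 * wi + (-16) * B^2 * c^2 * R * ui * v^2 * vi * w^2 * wi + (-16) * B^2 * c^2 * R * ui * v^3 * w^2 * wi + (4) * B^2 * c^2 * R * ui^3 * vi * w^2 * wi + (-4) * B^2 * c^2 * R * ui^3 * v * w^2 * wi + (16) * B^2 *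 c^2 * R * u * vi^3 * w^2 * wi + (16) * B^2 * c^2 * R * u * v * vi^2 * w^2 * wi + (-16) * B^2 * c^2 * R * u * v^2 * vi * w^2 * wi + (-16) * B^2 * c^2 * R * u * v^3 * w^2 * wi + (12) * B^2 * c^2 * R * u * ui^2 * vi * w^2 * wi + (-12) * B^2 * c^2 * R * u * ui^2 * v * w^2 * wi + (12) * B^2 * c^2 * R * u^2 * ui * vi * w^2 * wi + (-12) * B^2 * c^2 * R * u^2 * ui * v * w^2 * wi + (4) * B^2 * c^2 * R * u^3 * vi * w^2 * wi + (-4) * B^2 * c^2 * R * u^3 * v * w^2 * wi + (-8) * B^2 * c^3 * vi^4 * w^2 * wi + (-32) * B^2 * c^3 * v * vi^3 * w^2 * wi + (-48) * B^2 * c^3 * v^2 * vi^2 * w^2 * wi + (-32) * B^2 * c^3 * v^3 * vi * w^2 * wi + (-8) * B^2 * c^3 * v^4 * w^2 * wi + (12) * B^2 * c^3 * ui^2 * vi^2 * w^2 * wi + (24) * B^2 * c^3 * ui^2 * v * vi * w^2 * wi + (12) * B^2 * c^3 * ui^2 * v^2 * w^2 * wi + (2) * B^2 * c^3 * ui^4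 * w^2 * wi + (24) * B^2 * c^3 * u * ui * vi^2 * w^2 * wi + (48) * B^2 * c^3 * u * ui * v * vi * w^2 * wi + (24) * B^2 * c^3 * u * ui * v^2 * w^2 * wi + (8) * B^2 * c^3 * u * ui^3 * w^2 * wi + (12) * B^2 * c^3 * u^2 * vi^2 * w^2 * wi + (24) * B^2 * c^3 * u^2 * v * vi * w^2 * wi + (12) * B^2 * c^3 * u^2 * v^2 * w^2 * wi + (12) * B^2 * c^3 * u^2 * ui^2 * w^2 * wi + (8) * B^2 * c^3 * u^3 * ui * w^2 * wi + (2) * B^2 * c^3 * u^4 * w^2 * wi + (-64) * B^3 * R^2 * ui * v * vi^2 * w^2 * wi + (-64) * B^3 * R^2 * ui * v^2 * vi * w^2 * wi + (-64) * B^3 * R^2 * u * v * vi^2 * w^2 * wi + (-64) * B^3 * R^2 * u * v^2 * vi * w^2 * wi + (-16) * B^3 * c * R * vi^4 * w^2 * wi + (-32) * B^3 * c * R * v * vi^3 * w^2 * wi + (32) * B^3 * c * R * v^3 * vi * w^2 * wi + (16) * B^3 * c * R * v^4 * w^2 * wi + (-16) * B^3 * c * R * ui^2 * vi^2 * w^2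 * wi + (16) * B^3 * c * R * ui^2 * v^2 * w^2 * wi + (-32) * B^3 * c * R * u * ui * vi^2 * w^2 * wi + (32) * B^3 * c * R * u * ui * v^2 * w^2 * wi + (-16) * B^3 * c * R * u^2 * vi^2 * w^2 * wi + (16) * B^3 * c * R * u^2 * v^2 * w^2 * wi + (-16) * B^3 * c^2 * ui * vi^3 * w^2 * wi + (-48) * B^3 * c^2 * ui * v * vi^2 * w^2 * wi + (-48) * B^3 * c^2 * ui * v^2 * vi * w^2 * wi + (-16) * B^3 * c^2 * ui * v^3 * w^2 * wi + (-12) * B^3 * c^2 * ui^3 * vi * w^2 * wi + (-12) * B^3 * c^2 * ui^3 * v * w^2 * wi + (-16) * B^3 * c^2 * u * vi^3 * w^2 * wi + (-48) * B^3 * c^2 * u * v * vi^2 * w^2 * wi + (-48) * B^3 * c^2 * u * v^2 * vi * w^2 * wi + (-16) * B^3 * c^2 * u * v^3 * w^2 * wi + (-36) * B^3 * c^2 * u * ui^2 * vi * w^2 * wi + (-36) * B^3 * c^2 * u * ui^2 * v * w^2 * wi + (-36) * B^3 * c^2 * u^2 * ui * vi * w^2 * wi + (-36) * B^3 * c^2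 * u^2 * ui * v * w^2 * wi + (-12) * B^3 * c^2 * u^3 * vi * w^2 * wi + (-12) * B^3 * c^2 * u^3 * v * w^2 * wi + (16) * B^4 * R * ui * vi^3 * w^2 * wi + (16) * B^4 * R * ui * v * vi^2 * w^2 * wi + (-16) * B^4 * R * ui * v^2 * vi * w^2 * wi + (-16) * B^4 * R * ui * v^3 * w^2 * wi + (16) * B^4 * R * u * vi^3 * w^2 * wi + (16) * B^4 * R * u * v * vi^2 * w^2 * wi + (-16) * B^4 * R * u * v^2 * vi * w^2 * wi + (-16) * B^4 * R * u * v^3 * w^2 * wi + (16) * B^4 * c * vi^4 * w^2 * wi + (64) * B^4 * c * v * vi^3 * w^2 * wi + (96) * B^4 * c * v^2 * vi^2 * w^2 * wi + (64) * B^4 * c * v^3 * vi * w^2 * wi + (16) * B^4 * c * v^4 * w^2 * wi + (24) * B^4 * c * ui^2 * vi^2 * w^2 * wi + (48) * B^4 * c * ui^2 * v * vi * w^2 * wi + (24) * B^4 * c * ui^2 * v^2 * w^2 * wi + (48) * B^4 * c * u * ui * vi^2 * w^2 * wi + (96) * B^4 * c * u * ui * v * vi * w^2 * wi + (48) * B^4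 * c * u * ui * v^2 * w^2 * wi + (24) * B^4 * c * u^2 * vi^2 * w^2 * wi + (48) * B^4 * c * u^2 * v * vi * w^2 * wi + (24) * B^4 * c * u^2 * v^2 * w^2 * wi + (-16) * B^5 * ui * vi^3 * w^2 * wi + (-48) * B^5 * ui * v * vi^2 * w^2 * wi + (-48) * B^5 * ui * v^2 * vi * w^2 * wi + (-16) * B^5 * ui * v^3 * w^2 * wi + (-16) * B^5 * u * vi^3 * w^2 * wi + (-48) * B^5 * u * v * vi^2 * w^2 * wi + (-48) * B^5 * u * v^2 * vi * w^2 * wi + (-16) * B^5 * u * v^3 * w^2 * wi + (-64) * R^5 * u * ui^2 * vi * w + (64) * R^5 * u * ui^2 * v * w + (-64) * R^5 * u^2 * ui * vi * w + (64) * R^5 * u^2 * ui * v * w + (-16) * c * R^4 * ui^2 * vi^2 * w + (-64) * c * R^4 * ui^2 * v * vi * w + (-16) * c * R^4 * ui^2 * v^2 * w + (-96) * c * R^4 * u * ui * vi^2 * w + (-256) * c * R^4 * u * ui * v * vi * w + (-96) * c * R^4 * u * ui * v^2 * w + (-16) * c * R^4 * u^2 * vi^2 * w + (-64) * c * R^4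 * u^2 * v * vi * w + (-16) * c * R^4 * u^2 * v^2 * w + (-16) * c^2 * R^3 * ui * vi^3 * w + (-16) * c^2 * R^3 * ui * v * vi^2 * w + (16) * c^2 * R^3 * ui * v^2 * vi * w + (16) * c^2 * R^3 * ui * v^3 * w + (-4) * c^2 * R^3 * ui^3 * vi * w + (4) * c^2 * R^3 * ui^3 * v * w + (-16) * c^2 * R^3 * u * vi^3 * w + (-16) * c^2 * R^3 * u * v * vi^2 * w + (16) * c^2 * R^3 * u * v^2 * vi * w + (16) * c^2 * R^3 * u * v^3 * w + (-76) * c^2 * R^3 * u * ui^2 * vi * w + (76) * c^2 * R^3 * u * ui^2 * v * w + (-76) * c^2 * R^3 * u^2 * ui * vi * w + (76) * c^2 * R^3 * u^2 * ui * v * w + (-4) * c^2 * R^3 * u^3 * vi * w + (4) * c^2 * R^3 * u^3 * v * w + (-32) * c^3 * R^2 * v * vi^3 * w + (-64) * c^3 * R^2 * v^2 * vi^2 * w + (-32) * c^3 * R^2 * v^3 * vi * w + (-28) * c^3 * R^2 * ui^2 * vi^2 * w + (-88) * c^3 * R^2 * ui^2 * v * vi * w + (-28) * c^3 * R^2 *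 ui^2 * v^2 * w + (-2) * c^3 * R^2 * ui^4 * w + (-56) * c^3 * R^2 * u * ui * vi^2 * w + (-176) * c^3 * R^2 * u * ui * v * vi * w + (-56) * c^3 * R^2 * u * ui * v^2 * w + (-8) * c^3 * R^2 * u * ui^3 * w + (-28) * c^3 * R^2 * u^2 * vi^2 * w + (-88) * c^3 * R^2 * u^2 * v * vi * w + (-28) * c^3 * R^2 * u^2 * v^2 * w + (-12) * c^3 * R^2 * u^2 * ui^2 * w + (-8) * c^3 * R^2 * u^3 * ui * w + (-2) * c^3 * R^2 * u^4 * w + (-12) * c^4 * R * ui * vi^3 * w + (-12) * c^4 * R * ui * v * vi^2 * w + (12) * c^4 * R * ui * v^2 * vi * w + (12) * c^4 * R * ui * v^3 * w + (-4) * c^4 * R * ui^3 * vi * w + (4) * c^4 * R * ui^3 * v * w + (-12) * c^4 * R * u * vi^3 * w + (-12) * c^4 * R * u * v * vi^2 * w + (12) * c^4 * R * u * v^2 * vi * w + (12) * c^4 * R * u * v^3 * w + (-12) * c^4 * R * u * ui^2 * vi * w + (12) * c^4 * R * u * ui^2 * v * w + (-12) * c^4 * R * u^2 * ui * vi * w +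 (12) * c^4 * R * u^2 * ui * v * w + (-4) * c^4 * R * u^3 * vi * w + (4) * c^4 * R * u^3 * v * w + (-4) * c^5 * vi^4 * w + (-16) * c^5 * v * vi^3 * w + (-24) * c^5 * v^2 * vi^2 * w + (-16) * c^5 * v^3 * vi * w + (-4) * c^5 * v^4 * w + (-12) * c^5 * ui^2 * vi^2 * w + (-24) * c^5 * ui^2 * v * vi * w + (-12) * c^5 * ui^2 * v^2 * w + (-2) * c^5 * ui^4 * w + (-24) * c^5 * u * ui * vi^2 * w + (-48) * c^5 * u * ui * v * vi * w + (-24) * c^5 * u * ui * v^2 * w + (-8) * c^5 * u * ui^3 * w + (-12) * c^5 * u^2 * vi^2 * w + (-24) * c^5 * u^2 * v * vi * w + (-12) * c^5 * u^2 * v^2 * w + (-12) * c^5 * u^2 * ui^2 * w + (-8) * c^5 * u^3 * ui * w + (-2) * c^5 * u^4 * w + (64) * B * R^4 * u * ui^2 * vi * w + (64) * B * R^4 * u * ui^2 * v * w + (64) * B * R^4 * u^2 * ui * vi * w + (64) * B * R^4 * u^2 * ui * v * w + (16) * B * c * R^3 * ui^2 * vi^2 * w + (-16) * B * c * R^3 *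 ui^2 * v^2 * w + (96) * B * c * R^3 * u * ui * vi^2 * w + (-96) * B * c * R^3 * u * ui * v^2 * w + (16) * B * c * R^3 * u^2 * vi^2 * w + (-16) * B * c * R^3 * u^2 * v^2 * w + (16) * B * c^2 * R^2 * ui * vi^3 * w + (112) * B * c^2 * R^2 * ui * v * vi^2 * w + (112) * B * c^2 * R^2 * ui * v^2 * vi * w + (16) * B * c^2 * R^2 * ui * v^3 * w + (12) * B * c^2 * R^2 * ui^3 * vi * w + (12) * B * c^2 * R^2 * ui^3 * v * w + (16) * B * c^2 * R^2 * u * vi^3 * w + (112) * B * c^2 * R^2 * u * v * vi^2 * w + (112) * B * c^2 * R^2 * u * v^2 * vi * w + (16) * B * c^2 * R^2 * u * v^3 * w + (36) * B * c^2 * R^2 * u * ui^2 * vi * w + (36) * B * c^2 * R^2 * u * ui^2 * v * w + (36) * B * c^2 * R^2 * u^2 * ui * vi * w + (36) * B * c^2 * R^2 * u^2 * ui * v * w + (12) * B * c^2 * R^2 * u^3 * vi * w + (12) * B * c^2 * R^2 * u^3 * v * w + (12) * B * c^3 * R * ui^2 * vi^2 * w + (-12) * B * c^3 * R * ui^2 *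 v^2 * w + (24) * B * c^3 * R * u * ui * vi^2 * w + (-24) * B * c^3 * R * u * ui * v^2 * w + (12) * B * c^3 * R * u^2 * vi^2 * w + (-12) * B * c^3 * R * u^2 * v^2 * w + (12) * B * c^4 * ui * vi^3 * w + (36) * B * c^4 * ui * v * vi^2 * w + (36) * B * c^4 * ui * v^2 * vi * w + (12) * B * c^4 * ui * v^3 * w + (8) * B * c^4 * ui^3 * vi * w + (8) * B * c^4 * ui^3 * v * w + (12) * B * c^4 * u * vi^3 * w + (36) * B * c^4 * u * v * vi^2 * w + (36) * B * c^4 * u * v^2 * vi * w + (12) * B * c^4 * u * v^3 * w + (24) * B * c^4 * u * ui^2 * vi * w + (24) * B * c^4 * u * ui^2 * v * w + (24) * B * c^4 * u^2 * ui * vi * w + (24) * B * c^4 * u^2 * ui * v * w + (8) * B * c^4 * u^3 * vi * w + (8) * B * c^4 * u^3 * v * w + (-64) * B^2 * R^3 * u * ui^2 * vi * w + (64) * B^2 * R^3 * u * ui^2 * v * w + (-64) * B^2 * R^3 * u^2 * ui * vi * w + (64) * B^2 * R^3 * u^2 * ui * v * w + (-16) * B^2 * c * R^2 * ui^2 * vi^2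 * w + (-64) * B^2 * c * R^2 * ui^2 * v * vi * w + (-16) * B^2 * c * R^2 * ui^2 * v^2 * w + (-96) * B^2 * c * R^2 * u * ui * vi^2 * w + (-256) * B^2 * c * R^2 * u * ui * v * vi * w + (-96) * B^2 * c * R^2 * u * ui * v^2 * w + (-16) * B^2 * c * R^2 * u^2 * vi^2 * w + (-64) * B^2 * c * R^2 * u^2 * v * vi * w + (-16) * B^2 * c * R^2 * u^2 * v^2 * w + (-8) * B^2 * c^2 * R * ui * vi^3 * w + (-8) * B^2 * c^2 * R * ui * v * vi^2 * w + (8) * B^2 * c^2 * R * ui * v^2 * vi * w + (8) * B^2 * c^2 * R * ui * v^3 * w + (-4) * B^2 * c^2 * R * ui^3 * vi * w + (4) * B^2 * c^2 * R * ui^3 * v * w + (-8) * B^2 * c^2 * R * u * vi^3 * w + (-8) * B^2 * c^2 * R * u * v * vi^2 * w + (8) * B^2 * c^2 * R * u * v^2 * vi * w + (8) * B^2 * c^2 * R * u * v^3 * w + (-12) * B^2 * c^2 * R * u * ui^2 * vi * w + (12) * B^2 * c^2 * R * u * ui^2 * v * w + (-12) * B^2 * c^2 * R * u^2 * ui * vi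 * w + (12) * B^2 * c^2 * R * u^2 * ui * v * w + (-4) * B^2 * c^2 * R * u^3 * vi * w + (4) * B^2 * c^2 * R * u^3 * v * w + (-12) * B^2 * c^3 * ui^2 * vi^2 * w + (-24) * B^2 * c^3 * ui^2 * v * vi * w + (-12) * B^2 * c^3 * ui^2 * v^2 * w + (-2) * B^2 * c^3 * ui^4 * w + (-24) * B^2 * c^3 * u * ui * vi^2 * w + (-48) * B^2 * c^3 * u * ui * v * vi * w + (-24) * B^2 * c^3 * u * ui * v^2 * w + (-8) * B^2 * c^3 * u * ui^3 * w + (-12) * B^2 * c^3 * u^2 * vi^2 * w + (-24) * B^2 * c^3 * u^2 * v * vi * w + (-12) * B^2 * c^3 * u^2 * v^2 * w + (-12) * B^2 * c^3 * u^2 * ui^2 * w + (-8) * B^2 * c^3 * u^3 * ui * w + (-2) * B^2 * c^3 * u^4 * w + (64) * B^3 * R^2 * u * ui^2 * vi * w + (64) * B^3 * R^2 * u * ui^2 * v * w + (64) * B^3 * R^2 * u^2 * ui * vi * w + (64) * B^3 * R^2 * u^2 * ui * v * w + (16) * B^3 * c * R * ui^2 * vi^2 * w + (-16) * B^3 * c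 * R * ui^2 * v^2 * w + (32) * B^3 * c * R * u * ui * vi^2 * w + (-32) * B^3 * c * R * u * ui * v^2 * w + (16) * B^3 * c * R * u^2 * vi^2 * w + (-16) * B^3 * c * R * u^2 * v^2 * w + (4) * B^3 * c^2 * ui^3 * vi * w + (4) * B^3 * c^2 * ui^3 * v * w + (12) * B^3 * c^2 * u * ui^2 * vi * w + (12) * B^3 * c^2 * u * ui^2 * v * w + (12) * B^3 * c^2 * u^2 * ui * vi * w + (12) * B^3 * c^2 * u^2 * ui * v * w + (4) * B^3 * c^2 * u^3 * vi * w + (4) * B^3 * c^2 * u^3 * v * w + (-8) * B^4 * R * ui^3 * vi * w + (8) * B^4 * R * ui^3 * v * w + (-24) * B^4 * R * u * ui^2 * vi * w + (24) * B^4 * R * u * ui^2 * v * w + (-24) * B^4 * R * u^2 * ui * vi * w + (24) * B^4 * R * u^2 * ui * v * w + (-8) * B^4 * R * u^3 * vi * w + (8) * B^4 * R * u^3 * v * w) * hR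
      + ((-32) * c * R^6 * vi^2 * w^2 * wi + (-128) * c * R^6 * v * vi * w^2 * wi + (-32) * c * R^6 * v^2 * w^2 * wi + (-12) * c^2 * R^5 * ui * vi * w^2 * wi + (12) * c^2 * R^5 * ui * v * w^2 * wi + (-12) * c^2 * R^5 * u * vi * w^2 * wi + (12) * c^2 * R^5 * u * v * w^2 * wi + (-88) * c^3 * R^4 * vi^2 * w^2 * wi + (-304) * c^3 * R^4 * v * vi * w^2 * wi + (-88) * c^3 * R^4 * v^2 * w^2 * wi + (-8) * c^3 * R^4 * ui^2 * w^2 * wi + (-12) * c^3 * R^4 * u * ui * w^2 * wi + (-8) * c^3 * R^4 * u^2 * w^2 * wi + (-24) * c^4 * R^3 * ui * vi * w^2 * wi + (24) * c^4 * R^3 * ui * v * w^2 * wi + (-24) * c^4 * R^3 * u * vi * w^2 * wi + (24) * c^4 * R^3 * u * v * w^2 * wi + (-80) * c^5 * R^2 * vi^2 * w^2 * wi + (-224) * c^5 * R^2 * v * vi * w^2 * wi + (-80) * c^5 * R^2 * v^2 * w^2 * wi + (-16) * c^5 * R^2 * ui^2 * w^2 * wi + (-24) * c^5 * R^2 * u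 * ui * w^2 * wi + (-16) * c^5 * R^2 * u^2 * w^2 * wi + (-12) * c^6 * R * ui * vi * w^2 * wi + (12) * c^6 * R * ui * v * w^2 * wi + (-12) * c^6 * R * u * vi * w^2 * wi + (12) * c^6 * R * u * v * w^2 * wi + (-24) * c^7 * vi^2 * w^2 * wi + (-48) * c^7 * v * vi * w^2 * wi + (-24) * c^7 * v^2 * w^2 * wi + (-8) * c^7 * ui^2 * w^2 * wi + (-12) * c^7 * u * ui * w^2 * wi + (-8) * c^7 * u^2 * w^2 * wi + (32) * B * c * R^5 * vi^2 * w^2 * wi + (-32) * B * c * R^5 * v^2 * w^2 * wi + (36) * B * c^2 * R^4 * ui * vi * w^2 * wi + (36) * B * c^2 * R^4 * ui * v * w^2 * wi + (36) * B * c^2 * R^4 * u * vi * w^2 * wi + (36) * B * c^2 * R^4 * u * v * w^2 * wi + (56) * B * c^3 * R^3 * vi^2 * w^2 * wi + (-56) * B * c^3 * R^3 * v^2 * w^2 * wi + (60) * B * c^4 * R^2 * ui * vi * w^2 * wi + (60) * B * c^4 * R^2 * ui * v * w^2 * wi + (60) * B * c^4 * R^2 * u * vi * w^2 * wi + (60)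 * B * c^4 * R^2 * u * v * w^2 * wi + (24) * B * c^5 * R * vi^2 * w^2 * wi + (-24) * B * c^5 * R * v^2 * w^2 * wi + (24) * B * c^6 * ui * vi * w^2 * wi + (24) * B * c^6 * ui * v * w^2 * wi + (24) * B * c^6 * u * vi * w^2 * wi + (24) * B * c^6 * u * v * w^2 * wi + (64) * R^7 * ui * vi * w + (-64) * R^7 * ui * v * w + (64) * R^7 * u * vi * w + (-64) * R^7 * u * v * w + (96) * c * R^6 * vi^2 * w + (256) * c * R^6 * v * vi * w + (96) * c * R^6 * v^2 * w + (140) * c^2 * R^5 * ui * vi * w + (-140) * c^2 * R^5 * ui * v * w + (140) * c^2 * R^5 * u * vi * w + (-140) * c^2 * R^5 * u * v * w + (-12) * c^3 * R^4 * w^2 * wi + (152) * c^3 * R^4 * vi^2 * w + (432) * c^3 * R^4 * v * vi * w + (152) * c^3 * R^4 * v^2 * w + (8) * c^3 * R^4 * ui^2 * w + (12) * c^3 * R^4 * u * ui * w + (8) * c^3 * R^4 * u^2 * w + (88) * c^4 * R^3 * ui * vi * w + (-88) * c^4 * R^3 * ui * v * w + (88) * c^4 * R^3 * u * vi * w + (-88)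 * c^4 * R^3 * u * v * w + (-24) * c^5 * R^2 * w^2 * wi + (80) * c^5 * R^2 * vi^2 * w + (224) * c^5 * R^2 * v * vi * w + (80) * c^5 * R^2 * v^2 * w + (16) * c^5 * R^2 * ui^2 * w + (24) * c^5 * R^2 * u * ui * w + (16) * c^5 * R^2 * u^2 * w + (12) * c^6 * R * ui * vi * w + (-12) * c^6 * R * ui * v * w + (12) * c^6 * R * u * vi * w + (-12) * c^6 * R * u * v * w + (-12) * c^7 * w^2 * wi + (24) * c^7 * vi^2 * w + (48) * c^7 * v * vi * w + (24) * c^7 * v^2 * w + (8) * c^7 * ui^2 * w + (12) * c^7 * u * ui * w + (8) * c^7 * u^2 * w + (-64) * B * R^6 * ui * vi * w + (-64) * B * R^6 * ui * v * w + (-64) * B * R^6 * u * vi * w + (-64) * B * R^6 * u * v * w + (-96) * B * c * R^5 * vi^2 * w + (96) * B * c * R^5 * v^2 * w + (-100) * B * c^2 * R^4 * ui * vi * w + (-100) * B * c^2 * R^4 * ui * v * w + (-100) * B * c^2 * R^4 * u * vi * w + (-100) * B * c^2 * R^4 * u * v * w + (-120) * B * c^3 * R^3 * vi^2 * w + (120)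 * B * c^3 * R^3 * v^2 * w + (-60) * B * c^4 * R^2 * ui * vi * w + (-60) * B * c^4 * R^2 * ui * v * w + (-60) * B * c^4 * R^2 * u * vi * w + (-60) * B * c^4 * R^2 * u * v * w + (-24) * B * c^5 * R * vi^2 * w + (24) * B * c^5 * R * v^2 * w + (-24) * B * c^6 * ui * vi * w + (-24) * B * c^6 * ui * v * w + (-24) * B * c^6 * u * vi * w + (-24) * B * c^6 * u * v * w + (12) * c^3 * R^4 * w + (24) * c^5 * R^2 * w + (12) * c^7 * w) * hU
      + ((-64) * R^7 * ui * vi * w^2 * wi + (64) * R^7 * ui * v * w^2 * wi + (-64) * R^7 * u * vi * w^2 * wi + (64) * R^7 * u * v * w^2 * wi + (-64) * c * R^6 * vi^2 * w^2 * wi + (-128) * c * R^6 * v * vi * w^2 * wi + (-64) * c * R^6 * v^2 * w^2 * wi + (-64) * c * R^6 * ui^2 * w^2 * wi + (-64) * c * R^6 * u^2 * w^2 * wi + (-144) * c^2 * R^5 * ui * vi * w^2 * wi + (144) * c^2 * R^5 * ui * v * w^2 * wi + (-144) * c^2 * R^5 * u * vi * w^2 * wi + (144) * c^2 * R^5 *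 u * v * w^2 * wi + (-96) * c^3 * R^4 * vi^2 * w^2 * wi + (-192) * c^3 * R^4 * v * vi * w^2 * wi + (-96) * c^3 * R^4 * v^2 * w^2 * wi + (-152) * c^3 * R^4 * ui^2 * w^2 * wi + (-152) * c^3 * R^4 * u^2 * w^2 * wi + (-92) * c^4 * R^3 * ui * vi * w^2 * wi + (92) * c^4 * R^3 * ui * v * w^2 * wi + (-92) * c^4 * R^3 * u * vi * w^2 * wi + (92) * c^4 * R^3 * u * v * w^2 * wi + (-48) * c^5 * R^2 * vi^2 * w^2 * wi + (-88) * c^5 * R^2 * v * vi * w^2 * wi + (-48) * c^5 * R^2 * v^2 * w^2 * wi + (-112) * c^5 * R^2 * ui^2 * w^2 * wi + (-112) * c^5 * R^2 * u^2 * w^2 * wi + (-12) * c^6 * R * ui * vi * w^2 * wi + (12) * c^6 * R * ui * v * w^2 * wi + (-12) * c^6 * R * u * vi * w^2 * wi + (12) * c^6 * R * u * v * w^2 * wi + (-8) * c^7 * vi^2 * w^2 * wi + (-12) * c^7 * v * vi * w^2 * wi + (-8) * c^7 * v^2 * w^2 * wi + (-24) * c^7 * ui^2 * w^2 * wi + (-24)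 * c^7 * u^2 * w^2 * wi + (64) * B * R^6 * ui * vi * w^2 * wi + (64) * B * R^6 * ui * v * w^2 * wi + (64) * B * R^6 * u * vi * w^2 * wi + (64) * B * R^6 * u * v * w^2 * wi + (64) * B * c * R^5 * vi^2 * w^2 * wi + (-64) * B * c * R^5 * v^2 * w^2 * wi + (176) * B * c^2 * R^4 * ui * vi * w^2 * wi + (176) * B * c^2 * R^4 * ui * v * w^2 * wi + (176) * B * c^2 * R^4 * u * vi * w^2 * wi + (176) * B * c^2 * R^4 * u * v * w^2 * wi + (64) * B * c^3 * R^3 * vi^2 * w^2 * wi + (-64) * B * c^3 * R^3 * v^2 * w^2 * wi + (124) * B * c^4 * R^2 * ui * vi * w^2 * wi + (124) * B * c^4 * R^2 * ui * v * w^2 * wi + (124) * B * c^4 * R^2 * u * vi * w^2 * wi + (124) * B * c^4 * R^2 * u * v * w^2 * wi + (8) * B * c^5 * R * vi^2 * w^2 * wi + (-8) * B * c^5 * R * v^2 * w^2 * wi + (24) * B * c^6 * ui * vi * w^2 * wi + (24) * B * c^6 * ui * v * w^2 * wi + (24) * B * c^6 * u * vi * w^2 * wi + (24) * B * c^6 *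 u * v * w^2 * wi + (-256) * c * R^6 * w^2 * wi + (64) * c * R^6 * ui^2 * w + (64) * c * R^6 * u^2 * w + (16) * c^2 * R^5 * ui * vi * w + (-16) * c^2 * R^5 * ui * v * w + (16) * c^2 * R^5 * u * vi * w + (-16) * c^2 * R^5 * u * v * w + (-496) * c^3 * R^4 * w^2 * wi + (32) * c^3 * R^4 * vi^2 * w + (64) * c^3 * R^4 * v * vi * w + (32) * c^3 * R^4 * v^2 * w + (152) * c^3 * R^4 * ui^2 * w + (152) * c^3 * R^4 * u^2 * w + (28) * c^4 * R^3 * ui * vi * w + (-28) * c^4 * R^3 * ui * v * w + (28) * c^4 * R^3 * u * vi * w + (-28) * c^4 * R^3 * u * v * w + (-312) * c^5 * R^2 * w^2 * wi + (48) * c^5 * R^2 * vi^2 * w + (88) * c^5 * R^2 * v * vi * w + (48) * c^5 * R^2 * v^2 * w + (112) * c^5 * R^2 * ui^2 * w + (112) * c^5 * R^2 * u^2 * w + (12) * c^6 * R * ui * vi * w + (-12) * c^6 * R * ui * v * w + (12) * c^6 * R * u * vi * w + (-12) * c^6 * R * u * v * w + (-60) * c^7 * w^2 * wi + (8) * c^7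 * vi^2 * w + (12) * c^7 * v * vi * w + (8) * c^7 * v^2 * w + (24) * c^7 * ui^2 * w + (24) * c^7 * u^2 * w + (-112) * B * c^2 * R^4 * ui * vi * w + (-112) * B * c^2 * R^4 * ui * v * w + (-112) * B * c^2 * R^4 * u * vi * w + (-112) * B * c^2 * R^4 * u * v * w + (-124) * B * c^4 * R^2 * ui * vi * w + (-124) * B * c^4 * R^2 * ui * v * w + (-124) * B * c^4 * R^2 * u * vi * w + (-124) * B * c^4 * R^2 * u * v * w + (-8) * B * c^5 * R * vi^2 * w + (8) * B * c^5 * R * v^2 * w + (-24) * B * c^6 * ui * vi * w + (-24) * B * c^6 * ui * v * w + (-24) * B * c^6 * u * vi * w + (-24) * B * c^6 * u * v * w + (256) * c * R^6 * w + (496) * c^3 * R^4 * w + (312) * c^5 * R^2 * w + (60) * c^7 * w) * hV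
      + ((-16) * c * R^6 * ui^2 * vi^2 * w + (-16) * c * R^6 * ui^2 * v^2 * w + (-16) * c * R^6 * u^2 * vi^2 * w + (-16) * c * R^6 * u^2 * v^2 * w + (-16) * c^2 * R^5 * ui * vi^3 * w + (16) * c^2 * R^5 * ui * v^3 * w + (-4) * c^2 * R^5 * ui^3 * vi * w + (4) * c^2 * R^5 * ui^3 * v * w + (-16) * c^2 * R^5 * u * vi^3 * w + (16) * c^2 * R^5 * u * v^3 * w + (-4) * c^2 * R^5 * u^3 * vi * w + (4) * c^2 * R^5 * u^3 * v * w + (-44) * c^3 * R^4 * ui^2 * vi^2 * w + (-44) * c^3 * R^4 * ui^2 * v^2 * w + (-2) * c^3 * R^4 * ui^4 * w + (-44) * c^3 * R^4 * u^2 * vi^2 * w + (-44) * c^3 * R^4 * u^2 * v^2 * w + (-2) * c^3 * R^4 * u^4 * w + (-28) * c^4 * R^3 * ui * vi^3 * w + (28) * c^4 * R^3 * ui * v^3 * w + (-8) * c^4 * R^3 * ui^3 * vi * w + (8) * c^4 * R^3 * ui^3 * v * w + (-28) * c^4 * R^3 * u * vi^3 * w + (28) * c^4 * R^3 * u * v^3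 * w + (-8) * c^4 * R^3 * u^3 * vi * w + (8) * c^4 * R^3 * u^3 * v * w + (-4) * c^5 * R^2 * vi^4 * w + (-4) * c^5 * R^2 * v^4 * w + (-40) * c^5 * R^2 * ui^2 * vi^2 * w + (-40) * c^5 * R^2 * ui^2 * v^2 * w + (-4) * c^5 * R^2 * ui^4 * w + (-40) * c^5 * R^2 * u^2 * vi^2 * w + (-40) * c^5 * R^2 * u^2 * v^2 * w + (-4) * c^5 * R^2 * u^4 * w + (-12) * c^6 * R * ui * vi^3 * w + (12) * c^6 * R * ui * v^3 * w + (-4) * c^6 * R * ui^3 * vi * w + (4) * c^6 * R * ui^3 * v * w + (-12) * c^6 * R * u * vi^3 * w + (12) * c^6 * R * u * v^3 * w + (-4) * c^6 * R * u^3 * vi * w + (4) * c^6 * R * u^3 * v * w + (-2) * c^7 * vi^4 * w + (-2) * c^7 * v^4 * w + (-12) * c^7 * ui^2 * vi^2 * w + (-12) * c^7 * ui^2 * v^2 * w + (-2) * c^7 * ui^4 * w + (-12) * c^7 * u^2 * vi^2 * w + (-12) * c^7 * u^2 * v^2 * w + (-2) * c^7 * u^4 * w + (16) * B * c * R^5 *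 ui^2 * vi^2 * w + (-16) * B * c * R^5 * ui^2 * v^2 * w + (16) * B * c * R^5 * u^2 * vi^2 * w + (-16) * B * c * R^5 * u^2 * v^2 * w + (16) * B * c^2 * R^4 * ui * vi^3 * w + (16) * B * c^2 * R^4 * ui * v^3 * w + (12) * B * c^2 * R^4 * ui^3 * vi * w + (12) * B * c^2 * R^4 * ui^3 * v * w + (16) * B * c^2 * R^4 * u * vi^3 * w + (16) * B * c^2 * R^4 * u * v^3 * w + (12) * B * c^2 * R^4 * u^3 * vi * w + (12) * B * c^2 * R^4 * u^3 * v * w + (28) * B * c^3 * R^3 * ui^2 * vi^2 * w + (-28) * B * c^3 * R^3 * ui^2 * v^2 * w + (28) * B * c^3 * R^3 * u^2 * vi^2 * w + (-28) * B * c^3 * R^3 * u^2 * v^2 * w + (20) * B * c^4 * R^2 * ui * vi^3 * w + (20) * B * c^4 * R^2 * ui * v^3 * w + (20) * B * c^4 * R^2 * ui^3 * vi * w + (20) * B * c^4 * R^2 * ui^3 * v * w + (20) * B * c^4 * R^2 * u * vi^3 * w + (20) * B * c^4 * R^2 * u * v^3 * w + (20) * B * c^4 * R^2 * u^3 * vi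 * w + (20) * B * c^4 * R^2 * u^3 * v * w + (4) * B * c^5 * R * vi^4 * w + (-4) * B * c^5 * R * v^4 * w + (12) * B * c^5 * R * ui^2 * vi^2 * w + (-12) * B * c^5 * R * ui^2 * v^2 * w + (12) * B * c^5 * R * u^2 * vi^2 * w + (-12) * B * c^5 * R * u^2 * v^2 * w + (8) * B * c^6 * ui * vi^3 * w + (8) * B * c^6 * ui * v^3 * w + (8) * B * c^6 * ui^3 * vi * w + (8) * B * c^6 * ui^3 * v * w + (8) * B * c^6 * u * vi^3 * w + (8) * B * c^6 * u * v^3 * w + (8) * B * c^6 * u^3 * vi * w + (8) * B * c^6 * u^3 * v * w + (-64) * R^7 * ui * vi * w + (64) * R^7 * ui * v * w + (-64) * R^7 * u * vi * w + (64) * R^7 * u * v * w + (-96) * c * R^6 * vi^2 * w + (-96) * c * R^6 * v^2 * w + (-64) * c * R^6 * ui^2 * w + (-64) * c * R^6 * u^2 * w + (-156) * c^2 * R^5 * ui * vi * w + (156) * c^2 * R^5 * ui * v * w + (-156) * c^2 * R^5 * u * vi * w + (156) * c^2 * R^5 * u * v * w + (-184) * c^3 * R^4 * vi^2 * w + (-184)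 * c^3 * R^4 * v^2 * w + (-160) * c^3 * R^4 * ui^2 * w + (-160) * c^3 * R^4 * u^2 * w + (-116) * c^4 * R^3 * ui * vi * w + (116) * c^4 * R^3 * ui * v * w + (-116) * c^4 * R^3 * u * vi * w + (116) * c^4 * R^3 * u * v * w + (-128) * c^5 * R^2 * vi^2 * w + (-128) * c^5 * R^2 * v^2 * w + (-128) * c^5 * R^2 * ui^2 * w + (-128) * c^5 * R^2 * u^2 * w + (-24) * c^6 * R * ui * vi * w + (24) * c^6 * R * ui * v * w + (-24) * c^6 * R * u * vi * w + (24) * c^6 * R * u * v * w + (-32) * c^7 * vi^2 * w + (-32) * c^7 * v^2 * w + (-32) * c^7 * ui^2 * w + (-32) * c^7 * u^2 * w + (64) * B * R^6 * ui * vi * w + (64) * B * R^6 * ui * v * w + (64) * B * R^6 * u * vi * w + (64) * B * R^6 * u * v * w + (96) * B * c * R^5 * vi^2 * w + (-96) * B * c * R^5 * v^2 * w + (212) * B * c^2 * R^4 * ui * vi * w + (212) * B * c^2 * R^4 * ui * v * w + (212) * B * c^2 * R^4 * u * vi * w + (212) * B * c^2 * R^4 * u * v * w + (120) * B * c^3 *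 R^3 * vi^2 * w + (-120) * B * c^3 * R^3 * v^2 * w + (184) * B * c^4 * R^2 * ui * vi * w + (184) * B * c^4 * R^2 * ui * v * w + (184) * B * c^4 * R^2 * u * vi * w + (184) * B * c^4 * R^2 * u * v * w + (32) * B * c^5 * R * vi^2 * w + (-32) * B * c^5 * R * v^2 * w + (48) * B * c^6 * ui * vi * w + (48) * B * c^6 * ui * v * w + (48) * B * c^6 * u * vi * w + (48) * B * c^6 * u * v * w + (-256) * c * R^6 * w + (-508) * c^3 * R^4 * w + (-336) * c^5 * R^2 * w + (-72) * c^7 * w) * hW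
      + (I^2 * c^5 * vi^4 * w + (4) * I^2 * c^5 * v * vi^3 * w + (6) * I^2 * c^5 * v^2 * vi^2 * w + (4) * I^2 * c^5 * v^3 * vi * w + I^2 * c^5 * v^4 * w + (2) * I^2 * B * c^3 * R * vi^4 * w + (4) * I^2 * B * c^3 * R * v * vi^3 * w + (-4) * I^2 * B * c^3 * R * v^3 * vi * w + (-2) * I^2 * B * c^3 * R * v^4 * w + (-2) * I^2 * B * c^4 * ui * vi^3 * w + (-6) * I^2 * B * c^4 * ui * v * vi^2 * w + (-6) * I^2 * B * c^4 * ui * v^2 * vi * w + (-2) * I^2 * B * c^4 * ui * v^3 * w + (-2) * I^2 * B * c^4 * u * vi^3 * w + (-6) * I^2 * B * c^4 * u * v * vi^2 * w + (-6) * I^2 * B * c^4 * u * v^2 * vi * w + (-2) * I^2 * B * c^4 * u * v^3 * w + (-6) * I^2 * B^2 * c^2 * R * ui * vi^3 * w + (-6) * I^2 * B^2 * c^2 * R * ui * v * vi^2 * w + (6) * I^2 * B^2 * c^2 * R * ui * v^2 * vi * w + (6) * I^2 * B^2 * c^2 * R * ui * v^3 * w + (-6) * I^2 * B^2 * c^2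 * R * u * vi^3 * w + (-6) * I^2 * B^2 * c^2 * R * u * v * vi^2 * w + (6) * I^2 * B^2 * c^2 * R * u * v^2 * vi * w + (6) * I^2 * B^2 * c^2 * R * u * v^3 * w + (-2) * I^2 * B^2 * c^3 * vi^4 * w + (-8) * I^2 * B^2 * c^3 * v * vi^3 * w + (-12) * I^2 * B^2 * c^3 * v^2 * vi^2 * w + (-8) * I^2 * B^2 * c^3 * v^3 * vi * w + (-2) * I^2 * B^2 * c^3 * v^4 * w + (6) * I^2 * B^3 * c * R * ui^2 * vi^2 * w + (-6) * I^2 * B^3 * c * R * ui^2 * v^2 * w + (12) * I^2 * B^3 * c * R * u * ui * vi^2 * w + (-12) * I^2 * B^3 * c * R * u * ui * v^2 * w + (6) * I^2 * B^3 * c * R * u^2 * vi^2 * w + (-6) * I^2 * B^3 * c * R * u^2 * v^2 * w + (6) * I^2 * B^3 * c^2 * ui * vi^3 * w + (18) * I^2 * B^3 * c^2 * ui * v * vi^2 * w + (18) * I^2 * B^3 * c^2 * ui * v^2 * vi * w + (6) * I^2 * B^3 * c^2 * ui * v^3 * w + (2) * I^2 * B^3 * c^2 * ui^3 * vi * w +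 (2) * I^2 * B^3 * c^2 * ui^3 * v * w + (6) * I^2 * B^3 * c^2 * u * vi^3 * w + (18) * I^2 * B^3 * c^2 * u * v * vi^2 * w + (18) * I^2 * B^3 * c^2 * u * v^2 * vi * w + (6) * I^2 * B^3 * c^2 * u * v^3 * w + (6) * I^2 * B^3 * c^2 * u * ui^2 * vi * w + (6) * I^2 * B^3 * c^2 * u * ui^2 * v * w + (6) * I^2 * B^3 * c^2 * u^2 * ui * vi * w + (6) * I^2 * B^3 * c^2 * u^2 * ui * v * w + (2) * I^2 * B^3 * c^2 * u^3 * vi * w + (2) * I^2 * B^3 * c^2 * u^3 * v * w + (-2) * I^2 * B^4 * R * ui^3 * vi * w + (2) * I^2 * B^4 * R * ui^3 * v * w + (-6) * I^2 * B^4 * R * u * ui^2 * vi * w + (6) * I^2 * B^4 * R * u * ui^2 * v * w + (-6) * I^2 * B^4 * R * u^2 * ui * vi * w + (6) * I^2 * B^4 * R * u^2 * ui * v * w + (-2) * I^2 * B^4 * R * u^3 * vi * w + (2) * I^2 * B^4 * R * u^3 * v * w + (-6) * I^2 * B^4 * c * ui^2 * vi^2 * w + (-12) * I^2 * B^4 *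 c * ui^2 * v * vi * w + (-6) * I^2 * B^4 * c * ui^2 * v^2 * w + (-1) * I^2 * B^4 * c * ui^4 * w + (-12) * I^2 * B^4 * c * u * ui * vi^2 * w + (-24) * I^2 * B^4 * c * u * ui * v * vi * w + (-12) * I^2 * B^4 * c * u * ui * v^2 * w + (-4) * I^2 * B^4 * c * u * ui^3 * w + (-6) * I^2 * B^4 * c * u^2 * vi^2 * w + (-12) * I^2 * B^4 * c * u^2 * v * vi * w + (-6) * I^2 * B^4 * c * u^2 * v^2 * w + (-6) * I^2 * B^4 * c * u^2 * ui^2 * w + (-4) * I^2 * B^4 * c * u^3 * ui * w + (-1) * I^2 * B^4 * c * u^4 * w + (2) * I^2 * B^5 * ui^3 * vi * w + (2) * I^2 * B^5 * ui^3 * v * w + (6) * I^2 * B^5 * u * ui^2 * vi * w + (6) * I^2 * B^5 * u * ui^2 * v * w + (6) * I^2 * B^5 * u^2 * ui * vi * w + (6) * I^2 * B^5 * u^2 * ui * v * w + (2) * I^2 * B^5 * u^3 * vi * w + (2) * I^2 * B^5 * u^3 * v * w) * hb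

set_option maxHeartbeats 4000000 in
lemma key' (a b β c R : ℝ) (x t : ℝ) (hb : b = 2 * c ^ 2 - a ^ 2)
    (hR2 : R ^ 2 = β ^ 2 - c ^ 2) (hD : DenF β c R a x t ≠ 0) :
    I * GTF a b β c R x t + GXXF a b β c R x t
      + 2 * (GNF a b β c R x t / DenF β c R a x t) ^ 2
          * (WiF a b x t * NumcF β c R a x t / DenF β c R a x t) = 0 := by
  have hbC : (b : ℂ) = 2 * (c : ℂ) ^ 2 - (a : ℂ) ^ 2 := by exact_mod_cast hb
  have hR2C : (R : ℂ) ^ 2 = (β : ℂ) ^ 2 - (c : ℂ) ^ 2 := by exact_mod_cast hR2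
  have hkey := key a b β c R (Uf R a x t) (UiF R a x t) (Vf R β t) (ViF R β t)
    (Wf a b x t) (WiF a b x t) hbC hR2C UUi VVi WWi
  have e1 : I * GTF a b β c R x t + GXXF a b β c R x t
      + 2 * (GNF a b β c R x t / DenF β c R a x t) ^ 2
          * (WiF a b x t * NumcF β c R a x t / DenF β c R a x t)
      = (I * ((I * b * Wf a b x t * NumF β c R a x t + Wf a b x t * NumTF β c R a x t)
              * DenF β c R a x t - GNF a b β c R x t * DenTF β c R a x t)
          * DenF β c R a x t ^ 2
        + (F2XF a b β c R x t * DenF β c R a x t ^ 2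
            - F2F a b β c R x t * (2 * DenF β c R a x t * DenXF β c R a x t))
        + 2 * GNF a b β c R x t ^ 2 * (WiF a b x t * NumcF β c R a x t) * DenF β c R a x t)
        / (DenF β c R a x t ^ 2) ^ 2 := by
    rw [GTF, GXXF]
    field_simp
  rw [e1, div_eq_zero_iff]
  left
  simp only [GNF, GNXF, GNXXF, F2F, F2XF, NumF, NumcF, NumXF, NumXXF, NumTF, DenF, DenXF,
    DenXXF, DenTF, Av, Bv]
  linear_combination hkey

end NLSaux

theorem statement13 (a β c : ℝ) (hc : 0 < c) (hβ : c < β)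
    (b : ℝ) (hb : b = 2 * c ^ 2 - a ^ 2)
    (ρ : ℝ → ℝ → ℝ) (hρ : ∀ x t : ℝ, ρ x t = a * x + b * t)
    (R : ℝ) (hR : R = Real.sqrt (β ^ 2 - c ^ 2))
    (qb : ℝ → ℝ → ℂ)
    (hqb : ∀ x t : ℝ, qb x t =
      Complex.exp (I * (ρ x t : ℂ)) *
        (Complex.exp (-4 * I * ((R * β * t : ℝ) : ℂ)) * ((c ^ 2 + 2 * R * β - 2 * β ^ 2 : ℝ) : ℂ)
          + ((Real.exp (-4 * R * a * t + 2 * R * x) + Real.exp (4 * R * a * t - 2 * R * x) : ℝ) : ℂ)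
              * ((β * c : ℝ) : ℂ)
          + Complex.exp (4 * I * ((R * β * t : ℝ) : ℂ)) * ((c ^ 2 - 2 * R * β - 2 * β ^ 2 : ℝ) : ℂ))
      / ((2 * c * Real.cos (4 * R * β * t)
          - β * (Real.exp (-2 * R * x + 4 * R * a * t) + Real.exp (2 * R * x - 4 * R * a * t)) : ℝ) : ℂ)) :
    (∀ x t : ℝ,
      2 * c * Real.cos (4 * R * β * t) - 2 * β * Real.cosh (2 * R * x - 4 * R * a * t) ≠ 0)
    ∧ (∀ x t : ℝ,
      I * pT qb x t + pX (pX qb) x t + 2 * (qb x t) ^ 2 * (starRingEnd ℂ) (qb x t) = 0) := by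
  have hR2 : R ^ 2 = β ^ 2 - c ^ 2 := by rw [hR]; exact Real.sq_sqrt (by nlinarith)
  constructor
  · intro x t
    have h : 2 * c * Real.cos (4 * R * β * t) - 2 * β * Real.cosh (2 * R * x - 4 * R * a * t) < 0 := by
      nlinarith [Real.cos_le_one (4 * R * β * t), Real.one_le_cosh (2 * R * x - 4 * R * a * t)]
    exact ne_of_lt h
  · have hD : ∀ x t : ℝ, DenF β c R a x t ≠ 0 := fun x t => DenF_ne hc hβ
    have hqg : ∀ x t : ℝ, qb x t = GNF a b β c R x t / DenF β c R a x t := by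
      intro x t
      rw [hqb x t, hρ]
      have e1 : Complex.exp (I * ((a * x + b * t : ℝ) : ℂ)) = Wf a b x t := by
        rw [Wf]; exact congrArg Complex.exp (by push_cast; ring)
      have e2 : Complex.exp (-4 * I * ((R * β * t : ℝ) : ℂ)) = ViF R β t := by
        rw [ViF]; exact congrArg Complex.exp (by push_cast; ring)
      have e3 : Complex.exp (4 * I * ((R * β * t : ℝ) : ℂ)) = Vf R β t := by
        rw [Vf]; exact congrArg Complex.exp (by push_cast; ring)
      have e4 : ((Real.exp (-4 * R * a * t + 2 * R * x) : ℝ) : ℂ) = Uf R a x t := by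
        rw [Complex.ofReal_exp, Uf]; exact congrArg Complex.exp (by push_cast; ring)
      have e5 : ((Real.exp (4 * R * a * t - 2 * R * x) : ℝ) : ℂ) = UiF R a x t := by
        rw [Complex.ofReal_exp, UiF]; exact congrArg Complex.exp (by push_cast; ring)
      have e6 : ((2 * c * Real.cos (4 * R * β * t)
          - β * (Real.exp (-2 * R * x + 4 * R * a * t) + Real.exp (2 * R * x - 4 * R * a * t)) : ℝ) : ℂ)
          = DenF β c R a x t := by
        rw [DenF]
        push_cast
        rw [show Complex.exp (-2 * (R : ℂ) * x + 4 * R * a * t) = UiF R a x t from by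
              rw [UiF]; exact congrArg Complex.exp (by ring),
            show Complex.exp (2 * (R : ℂ) * x - 4 * (R : ℂ) * a * t) = Uf R a x t from by
              rw [Uf]; exact congrArg Complex.exp (by ring)]
        linear_combination (c : ℂ) * two_cos_VVi (R := R) (β := β) (t := t)
      rw [e1, e2, e3, Complex.ofReal_add, e4, e5, e6, GNF, NumF, Av, Bv]
      push_cast
      ring
    have hpX : ∀ x t : ℝ, pX qb x t = GXF a b β c R x t := by
      intro x t
      have hfun : (fun y => qb y t) = fun y => GNF a b β c R y t / DenF β c R a y t :=
        funext fun y => hqg y t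
      have h := (GNF_x (a := a) (b := b) (β := β) (c := c) (R := R) (x := x) (t := t)).div
        (DenF_x (β := β) (c := c) (R := R) (a := a) (x := x) (t := t)) (hD x t)
      have h' : HasDerivAt (fun y => GNF a b β c R y t / DenF β c R a y t)
          (GXF a b β c R x t) x := h.reshape (fun y => rfl) (by rw [GXF, F2F])
      simp only [pX]; rw [hfun]; exact h'.deriv
    intro x t
    have hpXX : pX (pX qb) x t = GXXF a b β c R x t := by
      have hfun : (fun y => pX qb y t) = fun y => GXF a b β c R y t := funext fun y => hpX y t
      have hDen2 : HasDerivAt (fun y => DenF β c R a y t ^ 2)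
          (2 * DenF β c R a x t * DenXF β c R a x t) x := by
        have h := (DenF_x (β := β) (c := c) (R := R) (a := a) (x := x) (t := t)).mul
          (DenF_x (β := β) (c := c) (R := R) (a := a) (x := x) (t := t))
        exact h.reshape (fun y => by simp only [Pi.mul_apply]; ring) (by ring)
      have h := (F2F_x (a := a) (b := b) (β := β) (c := c) (R := R) (x := x) (t := t)).div
        hDen2 (pow_ne_zero 2 (hD x t))
      have h' : HasDerivAt (fun y => GXF a b β c R y t) (GXXF a b β c R x t) x :=
        h.reshape (fun y => by rw [GXF]; rfl) (by rw [GXXF])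
      show deriv (fun y => pX qb y t) x = GXXF a b β c R x t
      rw [hfun]; exact h'.deriv
    have hpT : pT qb x t = GTF a b β c R x t := by
      have hfun : (fun s => qb x s) = fun s => GNF a b β c R x s / DenF β c R a x s :=
        funext fun s => hqg x s
      have hN : HasDerivAt (fun s => GNF a b β c R x s)
          (I * b * Wf a b x t * NumF β c R a x t + Wf a b x t * NumTF β c R a x t) t := by
        have h := (Wf_t (a := a) (b := b) (x := x) (t := t)).mul
          (NumF_t (β := β) (c := c) (R := R) (a := a) (x := x) (t := t))
        exact h.reshape (fun s => rfl) (by ring)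
      have h := hN.div (DenF_t (β := β) (c := c) (R := R) (a := a) (x := x) (t := t)) (hD x t)
      have h' : HasDerivAt (fun s => GNF a b β c R x s / DenF β c R a x s)
          (GTF a b β c R x t) t := h.reshape (fun s => rfl) (by rw [GTF, GNF])
      simp only [pT]; rw [hfun]; exact h'.deriv
    have hcj : (starRingEnd ℂ) (qb x t)
        = WiF a b x t * NumcF β c R a x t / DenF β c R a x t := by
      rw [hqg x t, map_div₀, GNF, map_mul, conj_Wf, conj_NumF, conj_DenF]
    rw [hpT, hpXX, hcj, hqg x t]
    exact key' a b β c R x t hb hR2 (hD x t)
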